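/- arXiv:1708.08255 — 4 statements merged into one kernel-verified Lean document; each statement's English description precedes it below -/
import Mathlib

section
/- For every finite connected simple graph G, the cop number of G is at least the minimum, taken over all vertices v of G, of the cardinality of a minimal siege of v. -/
/-- The m×n grid graph: vertices (i,j), adjacency when |i-i'|+|j-j'| = 1. -/
def gridGraph (m n : ℕ) : SimpleGraph (Fin m × Fin n) where
  Adj u v := Nat.dist u.1.val v.1.val + Nat.dist u.2.val v.2.val = 1
  symm := by
    constructor
    intro u v h
    simpa [Nat.dist_comm] using h
  loopless := by
    constructor
    intro u h
    simp [Nat.dist_self] at h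

/-- The semi-torus: the m×n grid with an additional toroidal closure
joining (i,0) to (i,n-1) for every row i. -/
def semiTorus (m n : ℕ) : SimpleGraph (Fin m × Fin n) :=
  SimpleGraph.fromRel (fun u v =>
    (Nat.dist u.1.val v.1.val + Nat.dist u.2.val v.2.val = 1) ∨
    (u.1 = v.1 ∧ u.2.val = 0 ∧ v.2.val = n - 1))

/-- The torus: vertices Z_m × Z_n, adjacent iff they differ by ±1 in exactly
one coordinate (mod m, resp. mod n). -/
def torusGraph (m n : ℕ) : SimpleGraph (ZMod m × ZMod n) :=
  SimpleGraph.fromRel (fun u v =>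
    (u.2 = v.2 ∧ u.1 = v.1 + 1) ∨ (u.1 = v.1 ∧ u.2 = v.2 + 1))

/-- A siege of a vertex `v`: a set `S` of vertices such that some vertex of `S`
is adjacent to `v`, and the closed neighborhoods of the vertices of `S`
cover the neighborhood of `v`. -/
def IsSiege {V : Type*} (G : SimpleGraph V) (v : V) (S : Finset V) : Prop :=
  (∃ u ∈ S, G.Adj u v) ∧ ∀ x, G.Adj v x → ∃ w ∈ S, x = w ∨ G.Adj w x

/-- The cardinality of a minimal siege of `v`. -/
noncomputable def siegeNumber {V : Type*} (G : SimpleGraph V) (v : V) : ℕ :=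
  sInf {c | ∃ S : Finset V, IsSiege G v S ∧ S.card = c}

/-- An e-loop: a chordless cycle on `e ≥ 4` vertices such that every vertex
outside the cycle is adjacent to at most one vertex of the cycle. -/
def IsELoop {V : Type*} (G : SimpleGraph V) (e : ℕ) (L : Finset V) : Prop :=
  4 ≤ e ∧ L.card = e ∧
  (∃ f : ZMod e → V,
    Function.Injective f ∧
    (∀ x, x ∈ L ↔ ∃ i, f i = x) ∧
    (∀ i j : ZMod e, G.Adj (f i) (f j) ↔ (j = i + 1 ∨ i = j + 1))) ∧
  (∀ x, x ∉ L → ∀ y ∈ L, ∀ z ∈ L, G.Adj x y → G.Adj x z → y = z)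

/-- A strategy for `k` cops on `G`: initial positions, and a move function
(depending on the round number, the current cop positions and the robber's
position) in which every cop moves to an adjacent vertex or stays still. -/
structure CopStrategy {V : Type*} (G : SimpleGraph V) (k : ℕ) where
  init : Fin k → V
  move : ℕ → (Fin k → V) → V → (Fin k → V)
  move_valid : ∀ i p r j, move i p r j = p j ∨ G.Adj (p j) (move i p r j)

/-- A strategy for the robber: an initial vertex chosen knowing the cops'
initial positions, and a move function (depending on the round number, the cop
positions after their move, and the robber's position) moving to an adjacent
vertex or staying still. -/
structure RobberStrategy {V : Type*} (G : SimpleGraph V) (k : ℕ) where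
  init : (Fin k → V) → V
  move : ℕ → (Fin k → V) → V → V
  move_valid : ∀ i p r, move i p r = r ∨ G.Adj r (move i p r)

/-- The play determined by a cop strategy and a robber strategy:
`gamePlay cs rs i` is the pair (cop positions, robber position) after round `i`. -/
def gamePlay {V : Type*} {G : SimpleGraph V} {k : ℕ}
    (cs : CopStrategy G k) (rs : RobberStrategy G k) : ℕ → (Fin k → V) × V
  | 0 => (cs.init, rs.init cs.init)
  | i + 1 =>
      let p := gamePlay cs rs i
      let c' := cs.move (i + 1) p.1 p.2
      (c', rs.move (i + 1) c' p.2)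

/-- The robber is captured within `t` rounds: at some round `i ≤ t`, some cop
occupies the robber's vertex (either right after the cops' move, or after the
robber's move). -/
def CapturedBy {V : Type*} {G : SimpleGraph V} {k : ℕ}
    (cs : CopStrategy G k) (rs : RobberStrategy G k) (t : ℕ) : Prop :=
  (∃ j, (gamePlay cs rs 0).1 j = (gamePlay cs rs 0).2) ∨
  (∃ i < t, ∃ j,
    (gamePlay cs rs (i + 1)).1 j = (gamePlay cs rs i).2 ∨
    (gamePlay cs rs (i + 1)).1 j = (gamePlay cs rs (i + 1)).2)

/-- `k` cops have a strategy capturing the robber (eventually). -/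
def CopsWin {V : Type*} (G : SimpleGraph V) (k : ℕ) : Prop :=
  ∃ cs : CopStrategy G k, ∀ rs : RobberStrategy G k, ∃ t, CapturedBy cs rs t

/-- The cop number of `G`. -/
noncomputable def copNumber {V : Type*} (G : SimpleGraph V) : ℕ :=
  sInf {k | CopsWin G k}
theorem siege_key {V : Type*} [Fintype V] [Nonempty V] (G : SimpleGraph V) (k : ℕ)
    (hw : CopsWin G k) : ∃ v, siegeNumber G v ≤ k := by
  classical
  by_contra hcon
  push_neg at hcon
  obtain ⟨cs, hcs⟩ := hw
  -- no set of ≤ k cop positions is a siege of any vertex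
  have hns : ∀ (p : Fin k → V) (v : V), ¬ IsSiege G v (Finset.image p Finset.univ) := by
    intro p v hS
    have h1 : siegeNumber G v ≤ (Finset.image p Finset.univ).card :=
      Nat.sInf_le ⟨_, hS, rfl⟩
    have h2 : (Finset.image p Finset.univ).card ≤ k :=
      le_trans Finset.card_image_le (by simp)
    exact absurd (h1.trans h2) (not_le.mpr (hcon v))
  -- k < card V
  have hk : k < Fintype.card V := by
    obtain ⟨v⟩ := (inferInstance : Nonempty V)
    have hv : k < siegeNumber G v := hcon v
    have hnb : ∃ u, G.Adj u v := by
      by_contra hno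
      push_neg at hno
      have hempty : {c | ∃ S, IsSiege G v S ∧ S.card = c} = ∅ := by
        ext c
        simp only [Set.mem_setOf_eq, Set.mem_empty_iff_false, iff_false]
        rintro ⟨S, ⟨⟨u, _, hadj⟩, _⟩, _⟩
        exact hno u hadj
      have h0 : siegeNumber G v = 0 := by simp [siegeNumber, hempty]
      omega
    obtain ⟨u, hu⟩ := hnb
    have hsiege : IsSiege G v (G.neighborFinset v) := by
      constructor
      · exact ⟨u, by simp [hu.symm], hu⟩
      · intro x hx
        exact ⟨x, by simp [hx], Or.inl rfl⟩
    have h1 : siegeNumber G v ≤ (G.neighborFinset v).card := Nat.sInf_le ⟨_, hsiege, rfl⟩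
    have h2 : (G.neighborFinset v).card ≤ Fintype.card V := Finset.card_le_univ _
    omega
  -- a safe vertex always exists
  have hsafe_exists : ∀ p : Fin k → V, ∃ r, ∀ j, p j ≠ r ∧ ¬ G.Adj (p j) r := by
    intro p
    by_contra hno
    push_neg at hno
    obtain ⟨v, hv⟩ : ∃ v, v ∉ Finset.image p Finset.univ := by
      by_contra hall
      push_neg at hall
      have hsub : (Finset.univ : Finset V) ⊆ Finset.image p Finset.univ := fun x _ => hall x
      have := Finset.card_le_card hsub
      have h2 : (Finset.image p Finset.univ).card ≤ k :=
        le_trans Finset.card_image_le (by simp)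
      simp only [Finset.card_univ] at this
      omega
    apply hns p v
    constructor
    · obtain ⟨j, hj⟩ := hno v
      refine ⟨p j, Finset.mem_image_of_mem _ (Finset.mem_univ j), ?_⟩
      apply hj
      intro he
      exact hv (he ▸ Finset.mem_image_of_mem _ (Finset.mem_univ j))
    · intro x _
      obtain ⟨j, hj⟩ := hno x
      by_cases he : p j = x
      · exact ⟨p j, Finset.mem_image_of_mem _ (Finset.mem_univ j), Or.inl he.symm⟩
      · exact ⟨p j, Finset.mem_image_of_mem _ (Finset.mem_univ j), Or.inr (hj he)⟩
  -- robber's move function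
  let rmove : (Fin k → V) → V → V := fun p r =>
    if h : ∃ x, G.Adj r x ∧ ∀ j, p j ≠ x ∧ ¬ G.Adj (p j) x then h.choose else r
  have hrmove_valid : ∀ p r, rmove p r = r ∨ G.Adj r (rmove p r) := by
    intro p r
    by_cases h : ∃ x, G.Adj r x ∧ ∀ j, p j ≠ x ∧ ¬ G.Adj (p j) x
    · right
      have he : rmove p r = h.choose := dif_pos h
      rw [he]
      exact h.choose_spec.1
    · left
      exact dif_neg h
  -- the crucial step lemma
  have hstep : ∀ (p p' : Fin k → V) (r : V),
      (∀ j, p j ≠ r ∧ ¬ G.Adj (p j) r) →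
      (∀ j, p' j = p j ∨ G.Adj (p j) (p' j)) →
      (∀ j, p' j ≠ r) ∧ (∀ j, p' j ≠ rmove p' r ∧ ¬ G.Adj (p' j) (rmove p' r)) := by
    intro p p' r hsafe hmv
    have ha : ∀ j, p' j ≠ r := by
      intro j he
      rcases hmv j with h | h
      · exact (hsafe j).1 (h ▸ he)
      · exact (hsafe j).2 (he ▸ h)
    refine ⟨ha, ?_⟩
    by_cases h : ∃ x, G.Adj r x ∧ ∀ j, p' j ≠ x ∧ ¬ G.Adj (p' j) x
    · have he : rmove p' r = h.choose := dif_pos h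
      rw [he]
      exact h.choose_spec.2
    · have hr : rmove p' r = r := dif_neg h
      rw [hr]
      intro j
      refine ⟨ha j, fun hadj => ?_⟩
      apply hns p' r
      constructor
      · exact ⟨p' j, Finset.mem_image_of_mem _ (Finset.mem_univ j), hadj⟩
      · intro x hx
        push_neg at h
        obtain ⟨j', hj'⟩ := h x hx
        by_cases he : p' j' = x
        · exact ⟨p' j', Finset.mem_image_of_mem _ (Finset.mem_univ j'), Or.inl he.symm⟩
        · exact ⟨p' j', Finset.mem_image_of_mem _ (Finset.mem_univ j'), Or.inr (hj' he)⟩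
  -- the robber strategy
  let rs : RobberStrategy G k :=
    { init := fun p =>
        if h : ∃ r, ∀ j, p j ≠ r ∧ ¬ G.Adj (p j) r then h.choose else Classical.arbitrary V
      move := fun _ p r => rmove p r
      move_valid := fun _ p r => hrmove_valid p r }
  obtain ⟨t, hcap⟩ := hcs rs
  -- invariant: after each round, no cop is in the closed neighborhood of the robber
  have hinv : ∀ i, ∀ j, (gamePlay cs rs i).1 j ≠ (gamePlay cs rs i).2 ∧
      ¬ G.Adj ((gamePlay cs rs i).1 j) ((gamePlay cs rs i).2) := by
    intro i
    induction i with
    | zero =>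
      show ∀ j, cs.init j ≠ rs.init cs.init ∧ ¬ G.Adj (cs.init j) (rs.init cs.init)
      have h := hsafe_exists cs.init
      have he : rs.init cs.init = h.choose := dif_pos h
      rw [he]
      exact h.choose_spec
    | succ n ih =>
      exact (hstep (gamePlay cs rs n).1 (cs.move (n + 1) (gamePlay cs rs n).1
        (gamePlay cs rs n).2) (gamePlay cs rs n).2 ih
        (cs.move_valid (n + 1) (gamePlay cs rs n).1 (gamePlay cs rs n).2)).2
  have hmid : ∀ i j, (gamePlay cs rs (i + 1)).1 j ≠ (gamePlay cs rs i).2 := by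
    intro i j
    exact (hstep (gamePlay cs rs i).1 (cs.move (i + 1) (gamePlay cs rs i).1
      (gamePlay cs rs i).2) (gamePlay cs rs i).2 (hinv i)
      (cs.move_valid (i + 1) (gamePlay cs rs i).1 (gamePlay cs rs i).2)).1 j
  rcases hcap with ⟨j, hj⟩ | ⟨i, _, j, hj | hj⟩
  · exact (hinv 0 j).1 hj
  · exact hmid i j hj
  · exact (hinv (i + 1) j).1 hj

/-- The cop number of a finite connected simple graph is at least the
minimum, over all vertices `v`, of the cardinality of a minimal siege of `v`. -/
theorem stmt_1 {V : Type*} [Fintype V] (G : SimpleGraph V) (hG : G.Connected) :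
    sInf (Set.range fun v => siegeNumber G v) ≤ copNumber G := by
  classical
  have hne : Nonempty V := hG.nonempty
  have hwin : CopsWin G (Fintype.card V) := by
    refine ⟨⟨fun j => (Fintype.equivFin V).symm j, fun _ p _ => p,
      fun _ _ _ _ => Or.inl rfl⟩, fun rs => ⟨0, Or.inl ?_⟩⟩
    exact ⟨Fintype.equivFin V (rs.init fun j => (Fintype.equivFin V).symm j),
      by simp [gamePlay]⟩
  have hmem : CopsWin G (copNumber G) := Nat.sInf_mem (s := {k | CopsWin G k}) ⟨_, hwin⟩
  obtain ⟨v, hv⟩ := siege_key G (copNumber G) hmem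
  exact le_trans (Nat.sInf_le ⟨v, rfl⟩) hv
end

section
/- In the cops and robber game on the grid G_{m,n} with m,n ≥ 2 played with two cops, for every strategy of the two cops the robber can force the capture time to be at least ⌊(m+n)/2⌋ − 1. -/
namespace S8

def pd {m n : ℕ} (u v : Fin m × Fin n) : ℕ :=
  Nat.dist u.1.val v.1.val + Nat.dist u.2.val v.2.val

def inB {m n : ℕ} (q w : Fin m × Fin n) : Prop :=
  Nat.dist w.1.val q.1.val ≤ 1 ∧ Nat.dist w.2.val q.2.val ≤ 1

lemma pair_eq_iff {m n : ℕ} (u v : Fin m × Fin n) :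
    u = v ↔ (u.1.val = v.1.val ∧ u.2.val = v.2.val) := by
  cases u; cases v; simp [Prod.ext_iff, Fin.ext_iff]

lemma pd_self {m n : ℕ} (u : Fin m × Fin n) : pd u u = 0 := by simp [pd, Nat.dist_self]

lemma pd_tri {m n : ℕ} (u v w : Fin m × Fin n) : pd u w ≤ pd u v + pd v w := by
  simp only [pd, Nat.dist]; omega

lemma pd_ne {m n : ℕ} {u v : Fin m × Fin n} (h : 1 ≤ pd u v) : u ≠ v := by
  rintro rfl; simp [pd_self] at h

lemma forall_fin2 {P : Fin 2 → Prop} (h0 : P 0) (h1 : P 1) : ∀ j, P j := by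
  intro j; fin_cases j <;> assumption

lemma corner {m n : ℕ} (hm : 2 ≤ m) (hn : 2 ≤ n) (c1 c2 : Fin m × Fin n) :
    ∃ q : Fin m × Fin n, (q.1.val = 0 ∨ q.1.val = m - 1) ∧
      (q.2.val = 0 ∨ q.2.val = n - 1) ∧ m + n - 2 ≤ pd c1 q + pd c2 q := by
  have h1 := c1.1.isLt; have h2 := c1.2.isLt
  have h3 := c2.1.isLt; have h4 := c2.2.isLt
  by_cases h : m + n - 2 ≤ pd c1 (⟨0, by omega⟩, ⟨0, by omega⟩) +
      pd c2 (⟨0, by omega⟩, ⟨0, by omega⟩)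
  · exact ⟨(⟨0, by omega⟩, ⟨0, by omega⟩), Or.inl rfl, Or.inl rfl, h⟩
  · refine ⟨(⟨m - 1, by omega⟩, ⟨n - 1, by omega⟩), Or.inr rfl, Or.inr rfl, ?_⟩
    simp only [pd, Nat.dist] at h ⊢
    omega

lemma dodge {m n : ℕ} (hm : 2 ≤ m) (hn : 2 ≤ n) (p c1 c2 : Fin m × Fin n) :
    ∃ w, (w = p ∨ (gridGraph m n).Adj p w) ∧ w ≠ c1 ∧ w ≠ c2 := by
  have hpx := p.1.isLt; have hpy := p.2.isLt
  set A : Fin m × Fin n :=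
    (⟨if p.1.val = 0 then 1 else p.1.val - 1, by split_ifs <;> omega⟩, p.2) with hA
  set B : Fin m × Fin n :=
    (p.1, ⟨if p.2.val = 0 then 1 else p.2.val - 1, by split_ifs <;> omega⟩) with hB
  have hadjA : (gridGraph m n).Adj p A := by
    show Nat.dist _ _ + Nat.dist _ _ = 1
    simp only [hA, Nat.dist]
    split_ifs <;> omega
  have hadjB : (gridGraph m n).Adj p B := by
    show Nat.dist _ _ + Nat.dist _ _ = 1
    simp only [hB, Nat.dist]
    split_ifs <;> omega
  by_cases h1 : p ≠ c1 ∧ p ≠ c2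
  · exact ⟨p, Or.inl rfl, h1.1, h1.2⟩
  by_cases h2 : A ≠ c1 ∧ A ≠ c2
  · exact ⟨A, Or.inr hadjA, h2.1, h2.2⟩
  refine ⟨B, Or.inr hadjB, ?_, ?_⟩ <;>
  · rw [Ne, pair_eq_iff]
    rw [not_and_or, not_not, not_not] at h1 h2
    rw [pair_eq_iff, pair_eq_iff] at h1
    rw [pair_eq_iff, pair_eq_iff] at h2
    simp only [hA, hB] at h1 h2 ⊢
    split_ifs at h1 h2 ⊢ <;> omega

lemma escCore (u1 v1 u2 v2 up vp uA vB : ℕ) (hup : up ≤ 1) (hvp : vp ≤ 1)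
    (huA : up + uA = 1) (hvB : vp + vB = 1)
    (h1 : ¬(u1 = up ∧ v1 = vp)) (h2 : ¬(u2 = up ∧ v2 = vp))
    (hsum : 4 ≤ u1 + v1 + (u2 + v2))
    (hP : ¬(2 ≤ Nat.dist u1 up + Nat.dist v1 vp ∧ 2 ≤ Nat.dist u2 up + Nat.dist v2 vp))
    (hA : ¬(2 ≤ Nat.dist u1 uA + Nat.dist v1 vp ∧ 2 ≤ Nat.dist u2 uA + Nat.dist v2 vp)) :
    2 ≤ Nat.dist u1 up + Nat.dist v1 vB ∧ 2 ≤ Nat.dist u2 up + Nat.dist v2 vB := by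
  simp only [Nat.dist] at *
  interval_cases up <;> interval_cases vp <;> omega

lemma initCore (u1 v1 u2 v2 uA vB : ℕ) (huA : uA = 1) (hvB : vB = 1)
    (hsum : 4 ≤ u1 + v1 + (u2 + v2))
    (h0 : ¬(2 ≤ u1 + v1 ∧ 2 ≤ u2 + v2))
    (hA : ¬(2 ≤ Nat.dist u1 uA + v1 ∧ 2 ≤ Nat.dist u2 uA + v2))
    (hB : ¬(2 ≤ u1 + Nat.dist v1 vB ∧ 2 ≤ u2 + Nat.dist v2 vB)) :
    2 ≤ Nat.dist u1 uA + Nat.dist v1 vB ∧ 2 ≤ Nat.dist u2 uA + Nat.dist v2 vB := by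
  subst huA hvB
  simp only [Nat.dist] at *
  omega

lemma ndRefl {M a b e : ℕ} (he : e = 0 ∨ e = M - 1) (ha : a < M) (hb : b < M) :
    Nat.dist a b = Nat.dist (Nat.dist a e) (Nat.dist b e) := by
  rcases he with h | h <;> subst h <;> simp only [Nat.dist] <;> omega

lemma ndInj {M a b e : ℕ} (he : e = 0 ∨ e = M - 1) (ha : a < M) (hb : b < M)
    (h : Nat.dist a e = Nat.dist b e) : a = b := by
  rcases he with h' | h' <;> subst h' <;> simp only [Nat.dist] at h <;> omega

lemma esc {m n : ℕ} (hm : 2 ≤ m) (hn : 2 ≤ n) (q c1 c2 p : Fin m × Fin n)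
    (hqx : q.1.val = 0 ∨ q.1.val = m - 1) (hqy : q.2.val = 0 ∨ q.2.val = n - 1)
    (hpB : inB q p) (h1 : c1 ≠ p) (h2 : c2 ≠ p)
    (hsum : 4 ≤ pd c1 q + pd c2 q) :
    ∃ w, (w = p ∨ (gridGraph m n).Adj p w) ∧ inB q w ∧ 2 ≤ pd c1 w ∧ 2 ≤ pd c2 w := by
  have hp1 := p.1.isLt; have hp2 := p.2.isLt
  have hc11 := c1.1.isLt; have hc12 := c1.2.isLt
  have hc21 := c2.1.isLt; have hc22 := c2.2.isLt
  have hup : Nat.dist p.1.val q.1.val ≤ 1 := hpB.1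
  have hvp : Nat.dist p.2.val q.2.val ≤ 1 := hpB.2
  have hAxv : ∃ Axv : ℕ, Axv < m ∧ Nat.dist p.1.val q.1.val + Nat.dist Axv q.1.val = 1 ∧
      Nat.dist p.1.val Axv = 1 := by
    rcases hqx with h | h
    · refine ⟨1 - p.1.val, ?_⟩
      simp only [Nat.dist] at hup ⊢
      rw [h] at hup ⊢
      omega
    · refine ⟨(2 * m - 3) - p.1.val, ?_⟩
      simp only [Nat.dist] at hup ⊢
      rw [h] at hup ⊢
      omega
  have hByv : ∃ Byv : ℕ, Byv < n ∧ Nat.dist p.2.val q.2.val + Nat.dist Byv q.2.val = 1 ∧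
      Nat.dist p.2.val Byv = 1 := by
    rcases hqy with h | h
    · refine ⟨1 - p.2.val, ?_⟩
      simp only [Nat.dist] at hvp ⊢
      rw [h] at hvp ⊢
      omega
    · refine ⟨(2 * n - 3) - p.2.val, ?_⟩
      simp only [Nat.dist] at hvp ⊢
      rw [h] at hvp ⊢
      omega
  obtain ⟨Axv, hAxlt, hAxq, hAxp⟩ := hAxv
  obtain ⟨Byv, hBylt, hByq, hByp⟩ := hByv
  set A : Fin m × Fin n := (⟨Axv, hAxlt⟩, p.2) with hAdef
  set B : Fin m × Fin n := (p.1, ⟨Byv, hBylt⟩) with hBdef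
  have hadjA : (gridGraph m n).Adj p A := by
    show Nat.dist _ _ + Nat.dist _ _ = 1
    rw [show A.1.val = Axv from rfl, show A.2.val = p.2.val from rfl, hAxp, Nat.dist_self]
  have hadjB : (gridGraph m n).Adj p B := by
    show Nat.dist _ _ + Nat.dist _ _ = 1
    rw [show B.1.val = p.1.val from rfl, show B.2.val = Byv from rfl, hByp, Nat.dist_self]
  have hAB : inB q A := ⟨by show Nat.dist Axv _ ≤ 1; omega, hpB.2⟩
  have hBB : inB q B := ⟨hpB.1, by show Nat.dist Byv _ ≤ 1; omega⟩
  by_cases hP : 2 ≤ pd c1 p ∧ 2 ≤ pd c2 p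
  · exact ⟨p, Or.inl rfl, hpB, hP.1, hP.2⟩
  by_cases hA : 2 ≤ pd c1 A ∧ 2 ≤ pd c2 A
  · exact ⟨A, Or.inr hadjA, hAB, hA.1, hA.2⟩
  refine ⟨B, Or.inr hadjB, hBB, ?_⟩
  have t1x := ndRefl hqx hc11 hp1
  have t1y := ndRefl hqy hc12 hp2
  have t2x := ndRefl hqx hc21 hp1
  have t2y := ndRefl hqy hc22 hp2
  have t1A := ndRefl hqx hc11 hAxlt
  have t2A := ndRefl hqx hc21 hAxlt
  have t1B := ndRefl hqy hc12 hBylt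
  have t2B := ndRefl hqy hc22 hBylt
  have h1' : ¬(Nat.dist c1.1.val q.1.val = Nat.dist p.1.val q.1.val ∧
      Nat.dist c1.2.val q.2.val = Nat.dist p.2.val q.2.val) := by
    rintro ⟨e1, e2⟩
    exact h1 ((pair_eq_iff _ _).2 ⟨ndInj hqx hc11 hp1 e1, ndInj hqy hc12 hp2 e2⟩)
  have h2' : ¬(Nat.dist c2.1.val q.1.val = Nat.dist p.1.val q.1.val ∧
      Nat.dist c2.2.val q.2.val = Nat.dist p.2.val q.2.val) := by
    rintro ⟨e1, e2⟩
    exact h2 ((pair_eq_iff _ _).2 ⟨ndInj hqx hc21 hp1 e1, ndInj hqy hc22 hp2 e2⟩)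
  have hP' : ¬(2 ≤ pd c1 p ∧ 2 ≤ pd c2 p) := hP
  have hA' : ¬(2 ≤ pd c1 A ∧ 2 ≤ pd c2 A) := hA
  simp only [pd, hAdef] at hP' hA'
  rw [t1x, t1y, t2x, t2y] at hP'
  rw [t1A, t1y, t2A, t2y] at hA'
  have key := escCore (Nat.dist c1.1.val q.1.val) (Nat.dist c1.2.val q.2.val)
    (Nat.dist c2.1.val q.1.val) (Nat.dist c2.2.val q.2.val)
    (Nat.dist p.1.val q.1.val) (Nat.dist p.2.val q.2.val)
    (Nat.dist Axv q.1.val) (Nat.dist Byv q.2.val)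
    hup hvp hAxq hByq h1' h2' (by simpa [pd] using hsum) hP' hA'
  simp only [pd, hBdef]
  rw [t1x, t1B, t2x, t2B]
  exact key

lemma initB {m n : ℕ} (hm : 2 ≤ m) (hn : 2 ≤ n) (q c1 c2 : Fin m × Fin n)
    (hqx : q.1.val = 0 ∨ q.1.val = m - 1) (hqy : q.2.val = 0 ∨ q.2.val = n - 1)
    (hsum : 4 ≤ pd c1 q + pd c2 q) :
    ∃ w, inB q w ∧ 2 ≤ pd c1 w ∧ 2 ≤ pd c2 w := by
  have hq1 := q.1.isLt; have hq2 := q.2.isLt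
  have hc11 := c1.1.isLt; have hc12 := c1.2.isLt
  have hc21 := c2.1.isLt; have hc22 := c2.2.isLt
  have hax : ∃ av : ℕ, av < m ∧ Nat.dist av q.1.val = 1 := by
    rcases hqx with h | h
    · exact ⟨1, by omega, by simp only [Nat.dist]; omega⟩
    · exact ⟨m - 2, by omega, by simp only [Nat.dist]; omega⟩
  have hby : ∃ bv : ℕ, bv < n ∧ Nat.dist bv q.2.val = 1 := by
    rcases hqy with h | h
    · exact ⟨1, by omega, by simp only [Nat.dist]; omega⟩
    · exact ⟨n - 2, by omega, by simp only [Nat.dist]; omega⟩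
  obtain ⟨av, havlt, hav⟩ := hax
  obtain ⟨bv, hbvlt, hbv⟩ := hby
  set ax : Fin m := ⟨av, havlt⟩
  set by' : Fin n := ⟨bv, hbvlt⟩
  by_cases h0 : 2 ≤ pd c1 q ∧ 2 ≤ pd c2 q
  · exact ⟨q, ⟨by simp [Nat.dist_self], by simp [Nat.dist_self]⟩, h0.1, h0.2⟩
  by_cases hA : 2 ≤ pd c1 (ax, q.2) ∧ 2 ≤ pd c2 (ax, q.2)
  · exact ⟨(ax, q.2), ⟨hav.le, by simp [Nat.dist_self]⟩, hA.1, hA.2⟩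
  by_cases hB : 2 ≤ pd c1 (q.1, by') ∧ 2 ≤ pd c2 (q.1, by')
  · exact ⟨(q.1, by'), ⟨by simp [Nat.dist_self], hbv.le⟩, hB.1, hB.2⟩
  refine ⟨(ax, by'), ⟨hav.le, hbv.le⟩, ?_⟩
  have t1x := ndRefl hqx hc11 havlt
  have t1y := ndRefl hqy hc12 hbvlt
  have t2x := ndRefl hqx hc21 havlt
  have t2y := ndRefl hqy hc22 hbvlt
  simp only [pd] at h0 hA hB ⊢
  rw [t1x, t2x] at hA
  rw [t1y, t2y] at hB
  rw [t1x, t1y, t2x, t2y]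
  exact initCore (Nat.dist c1.1.val q.1.val) (Nat.dist c1.2.val q.2.val)
    (Nat.dist c2.1.val q.1.val) (Nat.dist c2.2.val q.2.val)
    (Nat.dist av q.1.val) (Nat.dist bv q.2.val) hav hbv
    (by simpa [pd] using hsum) h0 hA hB

def good {m n : ℕ} (q : Fin m × Fin n) (Dm2 : ℕ) (i : ℕ) (cops : Fin 2 → Fin m × Fin n)
    (p w : Fin m × Fin n) : Prop :=
  (w = p ∨ (gridGraph m n).Adj p w) ∧ (∀ j, w ≠ cops j) ∧
    (i ≤ Dm2 → inB q w ∧ ∀ j, 2 ≤ pd (cops j) w)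

open Classical in
noncomputable def rmove {m n : ℕ} (q : Fin m × Fin n) (Dm2 : ℕ) (i : ℕ)
    (cops : Fin 2 → Fin m × Fin n) (p : Fin m × Fin n) : Fin m × Fin n :=
  if h : ∃ w, good q Dm2 i cops p w then h.choose else p

lemma rmove_valid {m n : ℕ} (q : Fin m × Fin n) (Dm2 i : ℕ) (cops) (p : Fin m × Fin n) :
    rmove q Dm2 i cops p = p ∨ (gridGraph m n).Adj p (rmove q Dm2 i cops p) := by
  classical
  unfold rmove
  split
  · next h => exact h.choose_spec.1
  · exact Or.inl rfl

lemma rmove_good {m n : ℕ} {q : Fin m × Fin n} {Dm2 i : ℕ} {cops} {p : Fin m × Fin n}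
    (h : ∃ w, good q Dm2 i cops p w) : good q Dm2 i cops p (rmove q Dm2 i cops p) := by
  classical
  unfold rmove
  rw [dif_pos h]
  exact h.choose_spec

lemma travel {m n k : ℕ} (cs : CopStrategy (gridGraph m n) k)
    (rs : RobberStrategy (gridGraph m n) k) (j : Fin k) :
    ∀ i, pd (cs.init j) ((gamePlay cs rs i).1 j) ≤ i := by
  intro i
  induction i with
  | zero => simp [gamePlay, pd_self]
  | succ i ih =>
    have h2 := cs.move_valid (i+1) (gamePlay cs rs i).1 (gamePlay cs rs i).2 j
    have he : (gamePlay cs rs (i+1)).1 j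
        = cs.move (i+1) (gamePlay cs rs i).1 (gamePlay cs rs i).2 j := rfl
    have htri := pd_tri (cs.init j) ((gamePlay cs rs i).1 j) ((gamePlay cs rs (i+1)).1 j)
    rcases h2 with h | h
    · rw [he, h] at htri ⊢
      have : pd ((gamePlay cs rs i).1 j) ((gamePlay cs rs i).1 j) = 0 := pd_self _
      omega
    · have : pd ((gamePlay cs rs i).1 j) ((gamePlay cs rs (i+1)).1 j) = 1 := by
        rw [he]; exact h
      omega

lemma cop_step {m n k : ℕ} (cs : CopStrategy (gridGraph m n) k)
    (rs : RobberStrategy (gridGraph m n) k) (j : Fin k) (i : ℕ) :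
    pd ((gamePlay cs rs i).1 j) ((gamePlay cs rs (i+1)).1 j) ≤ 1 := by
  have h2 := cs.move_valid (i+1) (gamePlay cs rs i).1 (gamePlay cs rs i).2 j
  have he : (gamePlay cs rs (i+1)).1 j
      = cs.move (i+1) (gamePlay cs rs i).1 (gamePlay cs rs i).2 j := rfl
  rcases h2 with h | h
  · rw [he, h]; simp [pd_self]
  · rw [he]; exact le_of_eq h

end S8

/-- On the grid G_{m,n} with m,n ≥ 2, against every strategy of two cops
the robber can force the capture time to be at least ⌊(m+n)/2⌋ - 1. -/
theorem stmt_8 (m n : ℕ) (hm : 2 ≤ m) (hn : 2 ≤ n)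
    (cs : CopStrategy (gridGraph m n) 2) :
    ∃ rs : RobberStrategy (gridGraph m n) 2,
      ∀ t : ℕ, CapturedBy cs rs t → (m + n) / 2 - 1 ≤ t := by
  classical
  set D : ℕ := (m + n) / 2 - 1 with hDdef
  obtain ⟨q, hqx, hqy, hqsum⟩ := S8.corner hm hn (cs.init 0) (cs.init 1)
  have hp0ex : ∃ p0 : Fin m × Fin n, (∀ j : Fin 2, p0 ≠ cs.init j) ∧
      (2 ≤ D → S8.inB q p0 ∧ ∀ j : Fin 2, 2 ≤ S8.pd (cs.init j) p0) := by
    by_cases h4 : 2 ≤ D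
    · obtain ⟨w, hwB, h1, h2⟩ := S8.initB hm hn q (cs.init 0) (cs.init 1) hqx hqy (by omega)
      exact ⟨w, S8.forall_fin2 (S8.pd_ne (by omega)).symm (S8.pd_ne (by omega)).symm,
        fun _ => ⟨hwB, S8.forall_fin2 h1 h2⟩⟩
    · obtain ⟨w, _, hne1, hne2⟩ := S8.dodge hm hn
        ((⟨0, by omega⟩, ⟨0, by omega⟩) : Fin m × Fin n) (cs.init 0) (cs.init 1)
      exact ⟨w, S8.forall_fin2 hne1 hne2, fun hc => absurd hc h4⟩
  obtain ⟨p0, hp0ne, hp0inv⟩ := hp0ex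
  refine ⟨⟨fun _ => p0, S8.rmove q (D - 2),
    fun i p r => S8.rmove_valid q (D - 2) i p r⟩, ?_⟩
  set rs : RobberStrategy (gridGraph m n) 2 :=
    ⟨fun _ => p0, S8.rmove q (D - 2), fun i p r => S8.rmove_valid q (D - 2) i p r⟩ with hrs
  have hrsucc : ∀ i : ℕ, (gamePlay cs rs (i+1)).2
      = S8.rmove q (D - 2) (i+1) ((gamePlay cs rs (i+1)).1) ((gamePlay cs rs i).2) := by
    intro i; rfl
  -- the main invariant: through round D-2 the robber stays in the corner block at
  -- distance ≥ 2 from both cops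
  have inv : 2 ≤ D → ∀ i, i ≤ D - 2 → S8.inB q ((gamePlay cs rs i).2) ∧
      ∀ j : Fin 2, 2 ≤ S8.pd ((gamePlay cs rs i).1 j) ((gamePlay cs rs i).2) := by
    intro h2 i
    induction i with
    | zero =>
      intro _
      exact ⟨(hp0inv h2).1, fun j => (hp0inv h2).2 j⟩
    | succ i ih =>
      intro hi
      obtain ⟨hB, hdist⟩ := ih (by omega)
      have hne : ∀ j : Fin 2, (gamePlay cs rs (i+1)).1 j ≠ (gamePlay cs rs i).2 := by
        intro j
        have hs := S8.cop_step cs rs j i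
        have ht := S8.pd_tri ((gamePlay cs rs i).1 j) ((gamePlay cs rs (i+1)).1 j)
          ((gamePlay cs rs i).2)
        have hd := hdist j
        exact S8.pd_ne (by omega)
      have hsum4 : 4 ≤ S8.pd ((gamePlay cs rs (i+1)).1 0) q
          + S8.pd ((gamePlay cs rs (i+1)).1 1) q := by
        have t0 := S8.travel cs rs 0 (i+1)
        have t1 := S8.travel cs rs 1 (i+1)
        have u0 := S8.pd_tri (cs.init 0) ((gamePlay cs rs (i+1)).1 0) q
        have u1 := S8.pd_tri (cs.init 1) ((gamePlay cs rs (i+1)).1 1) q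
        omega
      obtain ⟨w, hadj, hwB, hw1, hw2⟩ := S8.esc hm hn q ((gamePlay cs rs (i+1)).1 0)
        ((gamePlay cs rs (i+1)).1 1) ((gamePlay cs rs i).2) hqx hqy hB (hne 0) (hne 1) hsum4
      have hex : ∃ w, S8.good q (D - 2) (i+1) ((gamePlay cs rs (i+1)).1)
          ((gamePlay cs rs i).2) w :=
        ⟨w, hadj, S8.forall_fin2 (S8.pd_ne (by omega)).symm (S8.pd_ne (by omega)).symm,
          fun _ => ⟨hwB, S8.forall_fin2 hw1 hw2⟩⟩
      have hspec := S8.rmove_good hex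
      rw [hrsucc i]
      exact ⟨(hspec.2.2 hi).1, (hspec.2.2 hi).2⟩
  intro t hcap
  rcases hcap with ⟨j, hj⟩ | ⟨i, hit, j, hj⟩
  · exact absurd hj.symm (hp0ne j)
  · suffices hD : D ≤ i + 1 by omega
    by_contra hlt
    push_neg at hlt
    have h2 : 2 ≤ D := by omega
    have hi : i ≤ D - 2 := by omega
    obtain ⟨hB, hdist⟩ := inv h2 i hi
    rcases hj with hj | hj
    · have hs := S8.cop_step cs rs j i
      have ht := S8.pd_tri ((gamePlay cs rs i).1 j) ((gamePlay cs rs (i+1)).1 j)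
        ((gamePlay cs rs i).2)
      have hd := hdist j
      exact S8.pd_ne (by omega) hj
    · by_cases hii : i + 1 ≤ D - 2
      · obtain ⟨_, hdist'⟩ := inv h2 (i+1) hii
        have hd := hdist' j
        exact S8.pd_ne (by omega) hj
      · obtain ⟨w, hadj, hn1, hn2⟩ := S8.dodge hm hn ((gamePlay cs rs i).2)
          ((gamePlay cs rs (i+1)).1 0) ((gamePlay cs rs (i+1)).1 1)
        have hex : ∃ w, S8.good q (D - 2) (i+1) ((gamePlay cs rs (i+1)).1)
            ((gamePlay cs rs i).2) w :=
          ⟨w, hadj, S8.forall_fin2 hn1 hn2, fun hc => absurd hc hii⟩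
        have hspec := S8.rmove_good hex
        exact (hspec.2.1 j) ((hrsucc i) ▸ hj.symm)
end

section
/- In the cops and robber game on the semi-torus S_{m,n} with m ≥ 3 and n ≥ 4 played with two cops, for every strategy of the two cops the robber can force the capture time to be at least ⌊n/2⌋ + ⌊m/2⌋ − 2. -/
namespace ST10

/-! Auxiliary development for `stmt_10`. -/

def colAdj (n a b : ℕ) : Prop :=
  Nat.dist a b = 1 ∨ (a = 0 ∧ b = n - 1) ∨ (b = 0 ∧ a = n - 1)

lemma dist_def (a b : ℕ) : Nat.dist a b = a - b + (b - a) := rfl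

lemma colAdj_symm {n a b : ℕ} (h : colAdj n a b) : colAdj n b a := by
  unfold colAdj at h ⊢
  rw [Nat.dist_comm] at h
  tauto

lemma colAdj_ne {n a b : ℕ} (hn : 4 ≤ n) (h : colAdj n a b) : a ≠ b := by
  have hd := dist_def a b
  rcases h with h | ⟨h1, h2⟩ | ⟨h1, h2⟩ <;> omega

lemma adj_iff {m n : ℕ} (hn : 4 ≤ n) {u v : Fin m × Fin n} :
    (semiTorus m n).Adj u v ↔
      ((u.1 = v.1 ∧ colAdj n u.2.val v.2.val) ∨
       (u.2 = v.2 ∧ Nat.dist u.1.val v.1.val = 1)) := by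
  have d1 := dist_def u.1.val v.1.val
  have d2 := dist_def u.2.val v.2.val
  have d3 := dist_def v.1.val u.1.val
  have d4 := dist_def v.2.val u.2.val
  rw [semiTorus, SimpleGraph.fromRel_adj]
  constructor
  · rintro ⟨hne, h⟩
    rcases h with (h | ⟨h1, h2, h3⟩) | (h | ⟨h1, h2, h3⟩)
    · by_cases h0 : u.1.val = v.1.val
      · refine Or.inl ⟨Fin.ext h0, Or.inl (by omega)⟩
      · have hz : u.2.val = v.2.val := by omega
        exact Or.inr ⟨Fin.ext hz, by omega⟩
    · exact Or.inl ⟨h1, Or.inr (Or.inl ⟨h2, h3⟩)⟩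
    · by_cases h0 : u.1.val = v.1.val
      · refine Or.inl ⟨Fin.ext h0, Or.inl (by omega)⟩
      · have hz : u.2.val = v.2.val := by omega
        exact Or.inr ⟨Fin.ext hz, by omega⟩
    · exact Or.inl ⟨h1.symm, Or.inr (Or.inr ⟨h2, h3⟩)⟩
  · rintro (⟨h1, hc⟩ | ⟨h2, hd⟩)
    · have hne2 : u.2.val ≠ v.2.val := colAdj_ne hn hc
      have hr0 : u.1.val = v.1.val := congrArg Fin.val h1
      refine ⟨fun he => hne2 (by rw [he]), ?_⟩
      rcases hc with hd1 | ⟨ha, hb⟩ | ⟨ha, hb⟩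
      · exact Or.inl (Or.inl (by omega))
      · exact Or.inl (Or.inr ⟨h1, ha, hb⟩)
      · exact Or.inr (Or.inr ⟨h1.symm, ha, hb⟩)
    · have hc0 : u.2.val = v.2.val := congrArg Fin.val h2
      have hne1 : u.1.val ≠ v.1.val := by omega
      refine ⟨fun he => hne1 (by rw [he]), ?_⟩
      exact Or.inl (Or.inl (by omega))

def within1 {m n : ℕ} (a b : Fin m × Fin n) : Prop :=
  a = b ∨ (semiTorus m n).Adj a b

lemma not_within1_of_coords {m n : ℕ} (hn : 4 ≤ n) {a b : Fin m × Fin n}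
    (h1 : a.1 ≠ b.1) (h2 : a.2 ≠ b.2) : ¬ within1 a b := by
  rintro (he | hadj)
  · exact h1 (by rw [he])
  · rw [adj_iff hn] at hadj
    rcases hadj with ⟨hr, _⟩ | ⟨hc, _⟩
    · exact h1 hr
    · exact h2 hc

lemma row_ne {m : ℕ} {x1 x2 : Fin m} (hX : Nat.dist x1.val x2.val = 1) : x1 ≠ x2 := by
  intro h
  rw [h, Nat.dist_self] at hX
  omega

lemma col_ne {n : ℕ} (hn : 4 ≤ n) {c1 c2 : Fin n} (hC : colAdj n c1.val c2.val) :
    c1 ≠ c2 := fun h => colAdj_ne hn hC (by rw [h])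

/-- Key blocking lemma: a vertex adjacent to a corner of a square cannot
be within distance 1 of both square-neighbours of that corner. -/
lemma block {m n : ℕ} (hn : 4 ≤ n) {x1 x2 : Fin m} {c1 c2 : Fin n}
    (hX : Nat.dist x1.val x2.val = 1) (hC : colAdj n c1.val c2.val)
    {a : Fin m × Fin n} (ha : (semiTorus m n).Adj a (x1, c1)) :
    ¬ within1 a (x2, c1) ∨ ¬ within1 a (x1, c2) := by
  have hx12 : x1 ≠ x2 := row_ne hX
  have hc12 : c1 ≠ c2 := col_ne hn hC
  rw [adj_iff hn] at ha
  rcases ha with ⟨hr, hc⟩ | ⟨hcc, hrd⟩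
  · -- a.1 = x1 and colAdj a.2 c1 : then a is not within 1 of (x2, c1)
    left
    rintro (he | hadj)
    · subst he
      exact hx12 (hr : x2 = x1).symm
    · rw [adj_iff hn] at hadj
      rcases hadj with ⟨hr2, _⟩ | ⟨hcc2, _⟩
      · exact hx12 (((hr : a.1 = x1).symm.trans (hr2 : a.1 = x2)))
      · exact colAdj_ne hn (hc : colAdj n a.2.val c1.val)
          (congrArg Fin.val (hcc2 : a.2 = c1))
  · -- a.2 = c1 and rows at distance 1 : then a is not within 1 of (x1, c2)
    right
    rintro (he | hadj)
    · subst he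
      exact hc12 (hcc : c2 = c1).symm
    · rw [adj_iff hn] at hadj
      rcases hadj with ⟨hr2, _⟩ | ⟨hcc2, _⟩
      · rw [(hr2 : a.1 = x1), Nat.dist_self] at hrd
        omega
      · exact hc12 (((hcc : a.2 = c1).symm.trans (hcc2 : a.2 = c2)))

/-- A vertex within distance 1 of two opposite corners of the square is one of the
other two corners. -/
lemma oppo {m n : ℕ} (hn : 4 ≤ n) {x1 x2 : Fin m} {c1 c2 : Fin n}
    (hX : Nat.dist x1.val x2.val = 1) (hC : colAdj n c1.val c2.val)
    {z : Fin m × Fin n} (h1 : within1 z (x1, c1)) (h2 : within1 z (x2, c2)) :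
    z = (x1, c2) ∨ z = (x2, c1) := by
  have hx12 : x1 ≠ x2 := row_ne hX
  have hc12 : c1 ≠ c2 := col_ne hn hC
  rcases h1 with he1 | hadj1
  · subst he1
    rcases h2 with he2 | hadj2
    · exact absurd (congrArg Prod.fst he2 : x1 = x2) hx12
    · rw [adj_iff hn] at hadj2
      rcases hadj2 with ⟨hr, _⟩ | ⟨hc, _⟩
      · exact absurd (hr : x1 = x2) hx12
      · exact absurd (congrArg Fin.val (hc : c1 = c2)) (colAdj_ne hn hC)
  rcases h2 with he2 | hadj2
  · subst he2
    rw [adj_iff hn] at hadj1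
    rcases hadj1 with ⟨hr, _⟩ | ⟨hc, _⟩
    · exact absurd (hr : x2 = x1).symm hx12
    · exact absurd (congrArg Fin.val (hc : c2 = c1)).symm (colAdj_ne hn hC)
  rw [adj_iff hn] at hadj1 hadj2
  rcases hadj1 with ⟨hr1, hc1⟩ | ⟨hc1, hr1⟩ <;> rcases hadj2 with ⟨hr2, hc2⟩ | ⟨hc2, hr2⟩
  · exact absurd ((hr1 : z.1 = x1).symm.trans (hr2 : z.1 = x2)) hx12
  · exact Or.inl (Prod.ext_iff.mpr ⟨(hr1 : z.1 = x1), (hc2 : z.2 = c2)⟩)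
  · exact Or.inr (Prod.ext_iff.mpr ⟨(hr2 : z.1 = x2), (hc1 : z.2 = c1)⟩)
  · exact absurd ((hc1 : z.2 = c1).symm.trans (hc2 : z.2 = c2))
      (fun h => colAdj_ne hn hC (congrArg Fin.val h))

open Classical in
/-- The dance move inside the square. -/
noncomputable def danceMove {m n : ℕ} (s00 s01 s10 s11 a r : Fin m × Fin n) :
    Fin m × Fin n :=
  if r = s00 then (if ¬ within1 a s00 then s00 else if within1 a s10 then s01 else s10)
  else if r = s01 then (if ¬ within1 a s01 then s01 else if within1 a s11 then s00 else s11)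
  else if r = s10 then (if ¬ within1 a s10 then s10 else if within1 a s00 then s11 else s00)
  else if r = s11 then (if ¬ within1 a s11 then s11 else if within1 a s01 then s10 else s01)
  else r

def inSquare {m n : ℕ} (x1 x2 : Fin m) (c1 c2 : Fin n) (r : Fin m × Fin n) : Prop :=
  r = (x1, c1) ∨ r = (x1, c2) ∨ r = (x2, c1) ∨ r = (x2, c2)

lemma adj_row {m n : ℕ} (hn : 4 ≤ n) {x1 x2 : Fin m} {c1 : Fin n}
    (hX : Nat.dist x1.val x2.val = 1) :
    (semiTorus m n).Adj (x1, c1) (x2, c1) := by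
  rw [adj_iff hn]; exact Or.inr ⟨rfl, hX⟩

lemma adj_col {m n : ℕ} (hn : 4 ≤ n) {x1 : Fin m} {c1 c2 : Fin n}
    (hC : colAdj n c1.val c2.val) :
    (semiTorus m n).Adj (x1, c1) (x1, c2) := by
  rw [adj_iff hn]; exact Or.inl ⟨rfl, hC⟩

lemma dance_valid {m n : ℕ} (hn : 4 ≤ n) {x1 x2 : Fin m} {c1 c2 : Fin n}
    (hX : Nat.dist x1.val x2.val = 1) (hC : colAdj n c1.val c2.val)
    (a r : Fin m × Fin n) :
    danceMove (x1,c1) (x1,c2) (x2,c1) (x2,c2) a r = r ∨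
    (semiTorus m n).Adj r (danceMove (x1,c1) (x1,c2) (x2,c1) (x2,c2) a r) := by
  have hX' : Nat.dist x2.val x1.val = 1 := by rwa [Nat.dist_comm]
  have hC' : colAdj n c2.val c1.val := colAdj_symm hC
  unfold danceMove
  split_ifs <;> subst_vars <;>
    first
      | exact Or.inl rfl
      | exact Or.inr (adj_col hn hC)
      | exact Or.inr (adj_row hn hX)
      | exact Or.inr (adj_col hn hC')
      | exact Or.inr (adj_row hn hX')

lemma dance_safe {m n : ℕ} (hn : 4 ≤ n) {x1 x2 : Fin m} {c1 c2 : Fin n}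
    (hX : Nat.dist x1.val x2.val = 1) (hC : colAdj n c1.val c2.val)
    {a r : Fin m × Fin n}
    (hr : inSquare x1 x2 c1 c2 r) (ha : a ≠ r) :
    inSquare x1 x2 c1 c2 (danceMove (x1,c1) (x1,c2) (x2,c1) (x2,c2) a r) ∧
      ¬ within1 a (danceMove (x1,c1) (x1,c2) (x2,c1) (x2,c2) a r) := by
  have hX' : Nat.dist x2.val x1.val = 1 := by rwa [Nat.dist_comm]
  have hC' : colAdj n c2.val c1.val := colAdj_symm hC
  have hx12 : x1 ≠ x2 := row_ne hX
  have hc12 : c1 ≠ c2 := col_ne hn hC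
  have hne1 : ((x1 : Fin m), (c2 : Fin n)) ≠ (x1, c1) :=
    fun h => hc12 (congrArg Prod.snd h).symm
  have hne2 : ((x2 : Fin m), (c1 : Fin n)) ≠ (x1, c1) :=
    fun h => hx12 (congrArg Prod.fst h).symm
  have hne3 : ((x2 : Fin m), (c1 : Fin n)) ≠ (x1, c2) :=
    fun h => hx12 (congrArg Prod.fst h).symm
  have hne4 : ((x2 : Fin m), (c2 : Fin n)) ≠ (x1, c1) :=
    fun h => hx12 (congrArg Prod.fst h).symm
  have hne5 : ((x2 : Fin m), (c2 : Fin n)) ≠ (x1, c2) :=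
    fun h => hx12 (congrArg Prod.fst h).symm
  have hne6 : ((x2 : Fin m), (c2 : Fin n)) ≠ (x2, c1) :=
    fun h => hc12 (congrArg Prod.snd h).symm
  unfold danceMove
  rcases hr with hr | hr | hr | hr
  · subst hr
    rw [if_pos rfl]
    by_cases hw : within1 a (x1, c1)
    · rw [if_neg (not_not_intro hw)]
      have hadj : (semiTorus m n).Adj a (x1, c1) := hw.resolve_left ha
      have hb := block hn hX hC hadj
      by_cases hw2 : within1 a (x2, c1)
      · rw [if_pos hw2]
        exact ⟨Or.inr (Or.inl rfl), hb.resolve_left (not_not_intro hw2)⟩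
      · rw [if_neg hw2]
        exact ⟨Or.inr (Or.inr (Or.inl rfl)), hw2⟩
    · rw [if_pos hw]
      exact ⟨Or.inl rfl, hw⟩
  · subst hr
    rw [if_neg hne1, if_pos rfl]
    by_cases hw : within1 a (x1, c2)
    · rw [if_neg (not_not_intro hw)]
      have hadj : (semiTorus m n).Adj a (x1, c2) := hw.resolve_left ha
      have hb := block hn hX hC' hadj
      by_cases hw2 : within1 a (x2, c2)
      · rw [if_pos hw2]
        exact ⟨Or.inl rfl, hb.resolve_left (not_not_intro hw2)⟩
      · rw [if_neg hw2]
        exact ⟨Or.inr (Or.inr (Or.inr rfl)), hw2⟩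
    · rw [if_pos hw]
      exact ⟨Or.inr (Or.inl rfl), hw⟩
  · subst hr
    rw [if_neg hne2, if_neg hne3, if_pos rfl]
    by_cases hw : within1 a (x2, c1)
    · rw [if_neg (not_not_intro hw)]
      have hadj : (semiTorus m n).Adj a (x2, c1) := hw.resolve_left ha
      have hb := block hn hX' hC hadj
      by_cases hw2 : within1 a (x1, c1)
      · rw [if_pos hw2]
        exact ⟨Or.inr (Or.inr (Or.inr rfl)), hb.resolve_left (not_not_intro hw2)⟩
      · rw [if_neg hw2]
        exact ⟨Or.inl rfl, hw2⟩
    · rw [if_pos hw]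
      exact ⟨Or.inr (Or.inr (Or.inl rfl)), hw⟩
  · subst hr
    rw [if_neg hne4, if_neg hne5, if_neg hne6, if_pos rfl]
    by_cases hw : within1 a (x2, c2)
    · rw [if_neg (not_not_intro hw)]
      have hadj : (semiTorus m n).Adj a (x2, c2) := hw.resolve_left ha
      have hb := block hn hX' hC' hadj
      by_cases hw2 : within1 a (x1, c2)
      · rw [if_pos hw2]
        exact ⟨Or.inr (Or.inr (Or.inl rfl)), hb.resolve_left (not_not_intro hw2)⟩
      · rw [if_neg hw2]
        exact ⟨Or.inr (Or.inl rfl), hw2⟩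
    · rw [if_pos hw]
      exact ⟨Or.inr (Or.inr (Or.inr rfl)), hw⟩


/-! ### Numeric layer: the potential function -/

def axv (m p : ℕ) : ℕ := if m ≤ 2*p+1 then 0 else m - 2
def ayv (n q : ℕ) : ℕ := if q + n/2 < n then q + n/2 else q + n/2 - n
def ay1v (n q : ℕ) : ℕ := if ayv n q + 1 < n then ayv n q + 1 else 0
def cdist (n a b : ℕ) : ℕ := min (Nat.dist a b) (n - Nat.dist a b)
def rowF (m p x : ℕ) : ℕ := if m ≤ 2*p+1 then x - 1 else (m-2) - x
def colF (n q y : ℕ) : ℕ := min (cdist n y (ayv n q)) (cdist n y (ay1v n q))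
def Fv (m n p q : ℕ) (v : Fin m × Fin n) : ℕ := rowF m p v.1.val + colF n q v.2.val

lemma axv_lt (m p : ℕ) (hm : 3 ≤ m) : axv m p < m := by unfold axv; split <;> omega
lemma axv1_lt (m p : ℕ) (hm : 3 ≤ m) : axv m p + 1 < m := by unfold axv; split <;> omega
lemma ayv_lt (n q : ℕ) (hn : 4 ≤ n) (hq : q < n) : ayv n q < n := by
  unfold ayv; split <;> omega
lemma ay1v_lt (n q : ℕ) (hn : 4 ≤ n) (hq : q < n) : ay1v n q < n := by
  unfold ay1v; split <;> omega

lemma dist_ax : Nat.dist (axv m p) (axv m p + 1) = 1 := by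
  rw [dist_def]; omega

lemma colAdj_ay (n q : ℕ) (hn : 4 ≤ n) (hq : q < n) :
    colAdj n (ayv n q) (ay1v n q) := by
  have h1 := ayv_lt n q hn hq
  unfold ay1v
  split_ifs with h
  · exact Or.inl (by rw [dist_def]; omega)
  · exact Or.inr (Or.inr ⟨rfl, by omega⟩)

lemma rowF_ax : rowF m p (axv m p) = 0 := by unfold rowF axv; split <;> omega
lemma rowF_ax1 (hm : 3 ≤ m) : rowF m p (axv m p + 1) = 0 := by
  unfold rowF axv; split <;> omega
lemma cdist_self (n a : ℕ) : cdist n a a = 0 := by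
  unfold cdist; rw [Nat.dist_self]; omega
lemma colF_ay : colF n q (ayv n q) = 0 := by
  unfold colF; rw [cdist_self]; omega
lemma colF_ay1 : colF n q (ay1v n q) = 0 := by
  unfold colF; rw [cdist_self]; omega

lemma cdist_lip {n a b : ℕ} (t : ℕ) (hn : 4 ≤ n) (ha : a < n) (hb : b < n) (ht : t < n)
    (h : colAdj n a b) : cdist n a t ≤ cdist n b t + 1 := by
  have d1 := dist_def a t
  have d2 := dist_def b t
  have d3 := dist_def a b
  rcases h with h | ⟨h1, h2⟩ | ⟨h1, h2⟩ <;> unfold cdist <;> omega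

lemma colF_lip {n q a b : ℕ} (hn : 4 ≤ n) (hq : q < n) (ha : a < n) (hb : b < n)
    (h : colAdj n a b) : colF n q a ≤ colF n q b + 1 := by
  have l1 := cdist_lip (ayv n q) hn ha hb (ayv_lt n q hn hq) h
  have l2 := cdist_lip (ay1v n q) hn ha hb (ay1v_lt n q hn hq) h
  unfold colF
  omega

lemma Fv_lip {m n p q : ℕ} (hn : 4 ≤ n) (hq : q < n) {u v : Fin m × Fin n}
    (h : (semiTorus m n).Adj u v) : Fv m n p q u ≤ Fv m n p q v + 1 := by
  rw [adj_iff hn] at h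
  rcases h with ⟨hr, hc⟩ | ⟨hc, hr⟩
  · have hr' : u.1.val = v.1.val := congrArg Fin.val hr
    have := colF_lip hn hq u.2.isLt v.2.isLt hc
    unfold Fv
    rw [hr']
    omega
  · have hc' : u.2.val = v.2.val := congrArg Fin.val hc
    have hd := dist_def u.1.val v.1.val
    unfold Fv rowF
    rw [hc']
    split <;> omega

lemma Fv_self (m n p q : ℕ) (hm : 3 ≤ m) (hn : 4 ≤ n) (hp : p < m) (hq : q < n) :
    n / 2 + m / 2 - 2 ≤ rowF m p p + colF n q q := by
  have hrow : m / 2 - 1 ≤ rowF m p p := by unfold rowF; split <;> omega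
  have hcol : n / 2 - 1 ≤ colF n q q := by
    have c1 : n / 2 - 1 ≤ cdist n q (ayv n q) := by
      unfold cdist ayv
      rw [dist_def]
      split <;> omega
    have c2 : n / 2 - 1 ≤ cdist n q (ay1v n q) := by
      unfold cdist ay1v ayv
      rw [dist_def]
      split_ifs <;> omega
    unfold colF
    omega
  omega

end ST10

/-- On the semi-torus S_{m,n} (m ≥ 3, n ≥ 4), against every strategy of
two cops the robber can force the capture time to be at least ⌊n/2⌋ + ⌊m/2⌋ - 2. -/
theorem stmt_10 (m n : ℕ) (hm : 3 ≤ m) (hn : 4 ≤ n)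
    (cs : CopStrategy (semiTorus m n) 2) :
    ∃ rs : RobberStrategy (semiTorus m n) 2,
      ∀ t : ℕ, CapturedBy cs rs t → n / 2 + m / 2 - 2 ≤ t := by
  classical
  open ST10 in
  set T := n / 2 + m / 2 - 2 with hTdef
  have hT1 : 1 ≤ T := by omega
  set zB := cs.init 0 with hzB
  set zA := cs.init 1 with hzA
  set p := (zB.1 : ℕ) with hpdef
  set q := (zB.2 : ℕ) with hqdef
  have hp : p < m := zB.1.isLt
  have hq : q < n := zB.2.isLt
  set X0 : Fin m := ⟨ST10.axv m p, ST10.axv_lt m p hm⟩ with hX0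
  set X1 : Fin m := ⟨ST10.axv m p + 1, ST10.axv1_lt m p hm⟩ with hX1
  set C0 : Fin n := ⟨ST10.ayv n q, ST10.ayv_lt n q hn hq⟩ with hC0
  set C1 : Fin n := ⟨ST10.ay1v n q, ST10.ay1v_lt n q hn hq⟩ with hC1
  have hX : Nat.dist X0.val X1.val = 1 := ST10.dist_ax
  have hC : ST10.colAdj n C0.val C1.val := ST10.colAdj_ay n q hn hq
  -- potential facts
  have hFzB : T ≤ ST10.Fv m n p q zB := ST10.Fv_self m n p q hm hn hp hq
  have hFcor : ∀ v : Fin m × Fin n, ST10.inSquare X0 X1 C0 C1 v →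
      ST10.Fv m n p q v = 0 := by
    rintro v (hv | hv | hv | hv) <;> subst hv <;> simp only [ST10.Fv] <;>
      (first | rw [ST10.rowF_ax] | rw [ST10.rowF_ax1 hm]) <;>
      (first | rw [ST10.colF_ay] | rw [ST10.colF_ay1])
  -- choice of the initial vertex
  have hr0ex : ∃ r0 : Fin m × Fin n,
      ST10.inSquare X0 X1 C0 C1 r0 ∧ ¬ ST10.within1 zA r0 := by
    by_cases h00 : ST10.within1 zA (X0, C0)
    · by_cases h11 : ST10.within1 zA (X1, C1)
      · rcases ST10.oppo hn hX hC h00 h11 with hz | hz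
        · refine ⟨(X1, C0), Or.inr (Or.inr (Or.inl rfl)), ?_⟩
          rw [hz]
          exact ST10.not_within1_of_coords hn (ST10.row_ne hX)
            (Ne.symm (ST10.col_ne hn hC))
        · refine ⟨(X0, C1), Or.inr (Or.inl rfl), ?_⟩
          rw [hz]
          exact ST10.not_within1_of_coords hn (Ne.symm (ST10.row_ne hX))
            (ST10.col_ne hn hC)
      · exact ⟨(X1, C1), Or.inr (Or.inr (Or.inr rfl)), h11⟩
    · exact ⟨(X0, C0), Or.inl rfl, h00⟩
  obtain ⟨r0, hr0sq, hr0A⟩ := hr0ex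
  -- the robber strategy
  have hvalid : ∀ (i : ℕ) (c : Fin 2 → Fin m × Fin n) (r : Fin m × Fin n),
      (if i ≤ T - 2 then
        ST10.danceMove (X0,C0) (X0,C1) (X1,C0) (X1,C1) (c 1) r else r) = r ∨
      (semiTorus m n).Adj r (if i ≤ T - 2 then
        ST10.danceMove (X0,C0) (X0,C1) (X1,C0) (X1,C1) (c 1) r else r) := by
    intro i c r
    split_ifs with h
    · exact ST10.dance_valid hn hX hC (c 1) r
    · exact Or.inl rfl
  refine ⟨⟨fun _ => r0,
    fun i c r => if i ≤ T - 2 then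
      ST10.danceMove (X0,C0) (X0,C1) (X1,C0) (X1,C1) (c 1) r else r,
    hvalid⟩, ?_⟩
  intro t hcap
  set rs : RobberStrategy (semiTorus m n) 2 := ⟨fun _ => r0,
    fun i c r => if i ≤ T - 2 then
      ST10.danceMove (X0,C0) (X0,C1) (X1,C0) (X1,C1) (c 1) r else r,
    hvalid⟩ with hrs
  have play0 : (gamePlay cs rs) 0 = (cs.init, r0) := rfl
  have playS : ∀ i : ℕ, (gamePlay cs rs) (i+1) =
      (cs.move (i+1) ((gamePlay cs rs) i).1 ((gamePlay cs rs) i).2,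
        if i + 1 ≤ T - 2 then
          ST10.danceMove (X0,C0) (X0,C1) (X1,C0) (X1,C1)
            (cs.move (i+1) ((gamePlay cs rs) i).1 ((gamePlay cs rs) i).2 1) ((gamePlay cs rs) i).2
        else ((gamePlay cs rs) i).2) := fun i => rfl
  -- cop 0 stays far from the square for a long time
  have hB : ∀ i : ℕ, ST10.Fv m n p q zB ≤ ST10.Fv m n p q (((gamePlay cs rs) i).1 0) + i := by
    intro i
    induction i with
    | zero => simp [play0]; exact le_rfl
    | succ i ih =>
      have hv := cs.move_valid (i+1) ((gamePlay cs rs) i).1 ((gamePlay cs rs) i).2 0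
      have hco : ((gamePlay cs rs) (i+1)).1 0 = cs.move (i+1) ((gamePlay cs rs) i).1 ((gamePlay cs rs) i).2 0 := by
        rw [playS i]
      rcases hv with he | hadj
      · rw [hco, he]; omega
      · have hl := ST10.Fv_lip (p := p) hn hq hadj
        rw [hco]
        omega
  -- the invariant
  have hinv : ∀ i : ℕ, i ≤ T - 2 →
      ST10.inSquare X0 X1 C0 C1 ((gamePlay cs rs) i).2 ∧
        ¬ ST10.within1 (((gamePlay cs rs) i).1 1) ((gamePlay cs rs) i).2 := by
    intro i
    induction i with
    | zero => exact fun _ => ⟨hr0sq, hr0A⟩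
    | succ i ih =>
      intro hle
      have hle' : i ≤ T - 2 := by omega
      obtain ⟨hsq, hA⟩ := ih hle'
      have hne : cs.move (i+1) ((gamePlay cs rs) i).1 ((gamePlay cs rs) i).2 1 ≠ ((gamePlay cs rs) i).2 := by
        rcases cs.move_valid (i+1) ((gamePlay cs rs) i).1 ((gamePlay cs rs) i).2 1 with he | hadj
        · rw [he]; exact fun h => hA (Or.inl h)
        · intro h; rw [h] at hadj; exact hA (Or.inr hadj)
      have hd := ST10.dance_safe hn hX hC hsq hne
      have h2 : ((gamePlay cs rs) (i+1)).2 =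
          ST10.danceMove (X0,C0) (X0,C1) (X1,C0) (X1,C1)
            (cs.move (i+1) ((gamePlay cs rs) i).1 ((gamePlay cs rs) i).2 1) ((gamePlay cs rs) i).2 := by
        rw [playS i]; simp only [if_pos hle]
      have h1 : ((gamePlay cs rs) (i+1)).1 1 = cs.move (i+1) ((gamePlay cs rs) i).1 ((gamePlay cs rs) i).2 1 := by
        rw [playS i]
      rw [h1, h2]
      exact hd
  -- conclusion
  rcases hcap with ⟨j, hj⟩ | ⟨i, hit, j, hj⟩
  · exfalso
    have hj01 : j = 0 ∨ j = 1 := by omega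
    rcases hj01 with rfl | rfl
    · have : zB = r0 := hj
      have h0 : ST10.Fv m n p q r0 = 0 := hFcor r0 hr0sq
      rw [this] at hFzB
      omega
    · exact hr0A (Or.inl hj)
  · by_contra hlt
    push_neg at hlt
    have hi2 : i ≤ T - 2 := by omega
    obtain ⟨hsqi, hAi⟩ := hinv i hi2
    have h1 : ((gamePlay cs rs) (i+1)).1 j = cs.move (i+1) ((gamePlay cs rs) i).1 ((gamePlay cs rs) i).2 j := by
      rw [playS i]
    have hj01 : j = 0 ∨ j = 1 := by omega
    have hcase1 : ¬ (((gamePlay cs rs) (i+1)).1 j = ((gamePlay cs rs) i).2) := by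
      intro hj'
      rcases hj01 with rfl | rfl
      · have h0 : ST10.Fv m n p q ((gamePlay cs rs) i).2 = 0 := hFcor _ hsqi
        have hBi := hB (i+1)
        rw [hj'] at hBi
        omega
      · rcases cs.move_valid (i+1) ((gamePlay cs rs) i).1 ((gamePlay cs rs) i).2 1 with he | hadj
        · rw [h1, he] at hj'
          exact hAi (Or.inl hj')
        · rw [h1] at hj'
          rw [hj'] at hadj
          exact hAi (Or.inr hadj)
    rcases hj with hj | hj
    · exact hcase1 hj
    · by_cases hc : i + 1 ≤ T - 2
      · obtain ⟨hsq1, hA1⟩ := hinv (i+1) hc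
        rcases hj01 with rfl | rfl
        · have h0 : ST10.Fv m n p q ((gamePlay cs rs) (i+1)).2 = 0 := hFcor _ hsq1
          have hBi := hB (i+1)
          rw [hj] at hBi
          omega
        · exact hA1 (Or.inl hj)
      · have hstay : ((gamePlay cs rs) (i+1)).2 = ((gamePlay cs rs) i).2 := by
          rw [playS i]; simp only [if_neg hc]
        rw [hstay] at hj
        exact hcase1 hj
end

section
/- For every vertex u of the semi-torus S_{m,n} with m ≥ 3 and n ≥ 4, there exists a vertex w of S_{m,n} whose graph distance from u is at least ⌊n/2⌋ + ⌊m/2⌋. -/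
/-- Cyclic distance on `{0,...,n-1}`. -/
def cycD (n a b : ℕ) : ℕ := min (Nat.dist a b) (n - Nat.dist a b)

lemma semiTorus_adj_of (m n : ℕ) {a b : Fin m × Fin n}
    (h : Nat.dist a.1.val b.1.val + Nat.dist a.2.val b.2.val = 1) :
    (semiTorus m n).Adj a b := by
  have hne : a ≠ b := by
    rintro rfl; simp [Nat.dist_self] at h
  rw [semiTorus, SimpleGraph.fromRel_adj]
  exact ⟨hne, Or.inl (Or.inl h)⟩

lemma semiTorus_reach (m n : ℕ) (hm : 0 < m) (hn : 0 < n) :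
    ∀ k (v : Fin m × Fin n), v.1.val + v.2.val = k →
      (semiTorus m n).Reachable v (⟨0, hm⟩, ⟨0, hn⟩) := by
  intro k
  induction k with
  | zero =>
      intro v hv
      have h1 : v.1 = ⟨0, hm⟩ := Fin.ext (show v.1.val = 0 by omega)
      have h2 : v.2 = ⟨0, hn⟩ := Fin.ext (show v.2.val = 0 by omega)
      rw [show v = (v.1, v.2) from rfl, h1, h2]
  | succ k ih =>
      intro v hv
      by_cases h1 : v.1.val = 0
      · have h2 : 0 < v.2.val := by omega
        have adj : (semiTorus m n).Adj v (v.1, ⟨v.2.val - 1, by omega⟩) :=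
          semiTorus_adj_of m n (by simp [Nat.dist]; omega)
        exact adj.reachable.trans (ih _ (by simp; omega))
      · have adj : (semiTorus m n).Adj v (⟨v.1.val - 1, by omega⟩, v.2) :=
          semiTorus_adj_of m n (by simp [Nat.dist]; omega)
        exact adj.reachable.trans (ih _ (by simp; omega))

lemma walk_lb {V : Type*} {G : SimpleGraph V} (f : V → ℕ)
    (hf : ∀ a b, G.Adj a b → f a ≤ f b + 1) :
    ∀ {a b : V} (p : G.Walk a b), f a ≤ f b + p.length := by
  intro a b p
  induction p with
  | nil => simp
  | cons h q ih =>
      have := hf _ _ h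
      simp only [SimpleGraph.Walk.length_cons]
      omega

lemma nat_dist_eq' (a b : ℕ) : Nat.dist a b = a - b + (b - a) := rfl

set_option maxHeartbeats 1000000 in
lemma semiTorus_dist_lb (m n : ℕ) (hm : 3 ≤ m) (hn : 4 ≤ n)
    (u w : Fin m × Fin n) :
    Nat.dist u.1.val w.1.val + cycD n u.2.val w.2.val ≤ (semiTorus m n).dist u w := by
  have hf : ∀ a b, (semiTorus m n).Adj a b →
      Nat.dist a.1.val w.1.val + cycD n a.2.val w.2.val ≤
      Nat.dist b.1.val w.1.val + cycD n b.2.val w.2.val + 1 := by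
    intro a b hab
    rw [semiTorus, SimpleGraph.fromRel_adj] at hab
    obtain ⟨-, hab⟩ := hab
    have ha2 : a.2.val < n := a.2.isLt
    have hb2 : b.2.val < n := b.2.isLt
    have hW2 : w.2.val < n := w.2.isLt
    have key : Nat.dist a.1.val b.1.val + Nat.dist a.2.val b.2.val = 1 ∨
        (a.1.val = b.1.val ∧ ((a.2.val = 0 ∧ b.2.val = n - 1) ∨
          (b.2.val = 0 ∧ a.2.val = n - 1))) := by
      rcases hab with (h | ⟨h1, h2, h3⟩) | (h | ⟨h1, h2, h3⟩)
      · exact Or.inl h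
      · exact Or.inr ⟨congrArg Fin.val h1, Or.inl ⟨h2, h3⟩⟩
      · exact Or.inl (by rw [Nat.dist_comm a.1.val, Nat.dist_comm a.2.val]; exact h)
      · exact Or.inr ⟨(congrArg Fin.val h1).symm, Or.inr ⟨h2, h3⟩⟩
    simp only [cycD, nat_dist_eq'] at key ⊢
    omega
  have hreach : (semiTorus m n).Reachable u w := by
    have h1 := semiTorus_reach m n (by omega) (by omega) _ u rfl
    have h2 := semiTorus_reach m n (by omega) (by omega) _ w rfl
    exact h1.trans h2.symm
  obtain ⟨p, hp⟩ := hreach.exists_walk_length_eq_dist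
  have hlb := walk_lb (fun v => Nat.dist v.1.val w.1.val + cycD n v.2.val w.2.val) hf p
  have hfw : Nat.dist w.1.val w.1.val + cycD n w.2.val w.2.val = 0 := by
    simp [cycD, Nat.dist_self]
  rw [hp] at hlb
  omega

/-- For every vertex u of the semi-torus S_{m,n} (m ≥ 3, n ≥ 4) there is
a vertex w at graph distance at least ⌊n/2⌋ + ⌊m/2⌋ from u. -/
theorem stmt_11 (m n : ℕ) (hm : 3 ≤ m) (hn : 4 ≤ n) (u : Fin m × Fin n) :
    ∃ w : Fin m × Fin n, n / 2 + m / 2 ≤ (semiTorus m n).dist u w := by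
  obtain ⟨w1v, hw1lt, hw1d⟩ : ∃ x, x < m ∧ m / 2 ≤ Nat.dist u.1.val x := by
    by_cases h : m ≤ u.1.val * 2
    · exact ⟨0, by omega, by rw [nat_dist_eq']; omega⟩
    · exact ⟨m - 1, by omega, by rw [nat_dist_eq']; have := u.1.isLt; omega⟩
  obtain ⟨w2v, hw2lt, hw2d⟩ : ∃ x, x < n ∧ n / 2 ≤ cycD n u.2.val x := by
    refine ⟨(u.2.val + n / 2) % n, Nat.mod_lt _ (by omega), ?_⟩
    have hu2 : u.2.val < n := u.2.isLt
    rcases Nat.lt_or_ge (u.2.val + n / 2) n with h | h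
    · have hmod : (u.2.val + n / 2) % n = u.2.val + n / 2 := Nat.mod_eq_of_lt h
      simp only [cycD, nat_dist_eq', hmod]
      omega
    · have hmod : (u.2.val + n / 2) % n = u.2.val + n / 2 - n := by
        rw [Nat.mod_eq_sub_mod h, Nat.mod_eq_of_lt (by omega)]
      simp only [cycD, nat_dist_eq', hmod]
      omega
  refine ⟨(⟨w1v, hw1lt⟩, ⟨w2v, hw2lt⟩), ?_⟩
  have hkey := semiTorus_dist_lb m n hm hn u (⟨w1v, hw1lt⟩, ⟨w2v, hw2lt⟩)
  simp only at hkey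
  omega
end
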